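/- Let g ≥ 2 be an integer, let D > 3 be a squarefree positive integer, and let X, Y be positive integers with X² + D = 4Y^g and 16·Y^g < (1 + D)². If 𝔞 is an integral ideal of the ring of integers O of K = ℚ(√−D) such that 𝔞^g equals the principal ideal generated by (X + √−D)/2, then the class of 𝔞 in the ideal class group Cl(ℚ(√−D)) has order exactly g. -/

import Mathlib

open NumberField IntermediateField Polynomial
open scoped nonZeroDivisors

/-- The complex number `√-d = i·√d`. -/
noncomputable def sqrtNeg (d : ℕ) : ℂ := Complex.I * Real.sqrt d

theorem isIntegral_sqrtNeg (d : ℕ) : IsIntegral ℚ (sqrtNeg d) := by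
  refine ⟨X ^ 2 + C (d : ℚ), monic_X_pow_add_C _ two_ne_zero, ?_⟩
  have h : ((Real.sqrt d : ℝ) : ℂ) ^ 2 = (d : ℂ) := by
    rw [← Complex.ofReal_pow, Real.sq_sqrt (Nat.cast_nonneg d)]
    simp
  simp only [eval₂_add, eval₂_pow, eval₂_X, eval₂_C, sqrtNeg, mul_pow, Complex.I_sq, h]
  push_cast
  ring

/-- The imaginary quadratic field `K = ℚ(√-d)`, realized inside `ℂ`. -/
noncomputable def Kneg (d : ℕ) : IntermediateField ℚ ℂ := ℚ⟮sqrtNeg d⟯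

instance (d : ℕ) : FiniteDimensional ℚ (Kneg d) :=
  IntermediateField.adjoin.finiteDimensional (isIntegral_sqrtNeg d)

instance (d : ℕ) : NumberField (Kneg d) := ⟨⟩

set_option synthInstance.maxHeartbeats 1000000
set_option maxHeartbeats 1000000

lemma theta_sq (d : ℕ) : sqrtNeg d ^ 2 = -(d : ℂ) := by
  have h : ((Real.sqrt d : ℝ) : ℂ) ^ 2 = (d : ℂ) := by
    rw [← Complex.ofReal_pow, Real.sq_sqrt (Nat.cast_nonneg d)]; simp
  simp [sqrtNeg, mul_pow, Complex.I_sq, h]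

lemma theta_im (d : ℕ) : (sqrtNeg d).im = Real.sqrt d := by
  simp [sqrtNeg]

lemma theta_ne_zero {d : ℕ} (hd : 0 < d) : sqrtNeg d ≠ 0 := by
  intro h
  have := theta_im d
  rw [h] at this
  have : Real.sqrt d = 0 := by simpa using this.symm
  have := Real.sqrt_pos.mpr (by exact_mod_cast hd : (0:ℝ) < d)
  linarith

lemma conj_theta (d : ℕ) : (starRingEnd ℂ) (sqrtNeg d) = -sqrtNeg d := by
  simp [sqrtNeg, map_mul, Complex.conj_I, Complex.conj_ofReal]

noncomputable def repSet (d : ℕ) (hd : 0 < d) : Subfield ℂ where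
  carrier := {z | ∃ x y : ℚ, z = (x : ℂ) + (y : ℂ) * sqrtNeg d}
  zero_mem' := ⟨0, 0, by simp⟩
  one_mem' := ⟨1, 0, by simp⟩
  add_mem' := by
    rintro a b ⟨x, y, rfl⟩ ⟨x', y', rfl⟩
    exact ⟨x + x', y + y', by push_cast; ring⟩
  neg_mem' := by
    rintro a ⟨x, y, rfl⟩
    exact ⟨-x, -y, by push_cast; ring⟩
  mul_mem' := by
    rintro a b ⟨x, y, rfl⟩ ⟨x', y', rfl⟩
    refine ⟨x * x' - d * y * y', x * y' + x' * y, ?_⟩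
    push_cast
    linear_combination (y : ℂ) * (y' : ℂ) * theta_sq d
  inv_mem' := by
    rintro a ⟨x, y, rfl⟩
    by_cases h0 : (x : ℂ) + (y : ℂ) * sqrtNeg d = 0
    · exact ⟨0, 0, by rw [h0]; simp⟩
    · have hd' : (1:ℚ) ≤ d := by exact_mod_cast hd
      have hn : x ^ 2 + d * y ^ 2 ≠ 0 := by
        intro hn
        have hx2 : x ^ 2 = 0 := by nlinarith [sq_nonneg x, sq_nonneg y]
        have hy2 : y ^ 2 = 0 := by nlinarith [sq_nonneg x, sq_nonneg y]
        rw [pow_eq_zero_iff (two_ne_zero)] at hx2 hy2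
        subst hx2; subst hy2; simp at h0
      refine ⟨x / (x ^ 2 + d * y ^ 2), -y / (x ^ 2 + d * y ^ 2),
        inv_eq_of_mul_eq_one_right ?_⟩
      have hnC : ((x:ℂ) ^ 2 + (d:ℂ) * (y:ℂ) ^ 2) ≠ 0 := by
        intro hc
        exact hn (by exact_mod_cast hc)
      have hinv := mul_inv_cancel₀ hnC
      push_cast
      linear_combination (-(y:ℂ)^2 * ((x:ℂ) ^ 2 + (d:ℂ) * (y:ℂ) ^ 2)⁻¹) * theta_sq d + hinv

lemma mem_rep {d : ℕ} (hd : 0 < d) (z : Kneg d) :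
    ∃ x y : ℚ, (z : ℂ) = (x : ℂ) + (y : ℂ) * sqrtNeg d := by
  have hT : Kneg d ≤ Subfield.toIntermediateField (repSet d hd)
      (fun q => ⟨q, 0, by rw [eq_ratCast (algebraMap ℚ ℂ) q]; simp⟩) := by
    rw [Kneg, adjoin_le_iff]
    rintro w rfl
    exact ⟨0, 1, by simp⟩
  exact hT z.2

lemma ratCast_mem (d : ℕ) (q : ℚ) : ((q : ℂ)) ∈ Kneg d := by
  have := (Kneg d).algebraMap_mem q
  rwa [eq_ratCast (algebraMap ℚ ℂ) q] at this

lemma theta_mem (d : ℕ) : sqrtNeg d ∈ Kneg d :=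
  IntermediateField.mem_adjoin_simple_self ℚ (sqrtNeg d)

lemma conj_mem {d : ℕ} (hd : 0 < d) (z : Kneg d) : (starRingEnd ℂ) (z : ℂ) ∈ Kneg d := by
  obtain ⟨x, y, hxy⟩ := mem_rep hd z
  rw [hxy]
  rw [map_add, map_mul, conj_theta, map_ratCast, map_ratCast]
  have : (x : ℂ) + (y : ℂ) * -sqrtNeg d = (x : ℂ) + (-y : ℚ) * sqrtNeg d := by push_cast; ring
  rw [this]
  exact add_mem (ratCast_mem d x) (mul_mem (ratCast_mem d (-y)) (theta_mem d))

/-- complex conjugation as a ring hom on `Kneg d` -/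
noncomputable def conjK {d : ℕ} (hd : 0 < d) : Kneg d →+* Kneg d where
  toFun z := ⟨(starRingEnd ℂ) (z : ℂ), conj_mem hd z⟩
  map_one' := by ext; simp
  map_mul' a b := by ext; simp
  map_zero' := by ext; simp
  map_add' a b := by ext; simp

@[simp] lemma conjK_coe {d : ℕ} (hd : 0 < d) (z : Kneg d) :
    ((conjK hd z : Kneg d) : ℂ) = (starRingEnd ℂ) (z : ℂ) := rfl

noncomputable def conjO {d : ℕ} (hd : 0 < d) :
    RingOfIntegers (Kneg d) →+* RingOfIntegers (Kneg d) :=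
  RingOfIntegers.mapRingHom (conjK hd)

/-- the complex value map on algebraic integers, as a ring hom -/
noncomputable def cvalHom (d : ℕ) : RingOfIntegers (Kneg d) →+* ℂ :=
  ((Kneg d).val.toRingHom).comp (algebraMap (RingOfIntegers (Kneg d)) (Kneg d))

/-- the complex value of an algebraic integer -/
noncomputable def cval {d : ℕ} (z : RingOfIntegers (Kneg d)) : ℂ := cvalHom d z

lemma cval_def {d : ℕ} (z : RingOfIntegers (Kneg d)) : cval z = ((z : Kneg d) : ℂ) := rfl

@[simp] lemma cval_conjO {d : ℕ} (hd : 0 < d) (z : RingOfIntegers (Kneg d)) :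
    cval (conjO hd z) = (starRingEnd ℂ) (cval z) := rfl

lemma cval_add {d : ℕ} (a b : RingOfIntegers (Kneg d)) : cval (a + b) = cval a + cval b :=
  map_add (cvalHom d) a b
lemma cval_mul {d : ℕ} (a b : RingOfIntegers (Kneg d)) : cval (a * b) = cval a * cval b :=
  map_mul (cvalHom d) a b
lemma cval_sub {d : ℕ} (a b : RingOfIntegers (Kneg d)) : cval (a - b) = cval a - cval b :=
  map_sub (cvalHom d) a b
lemma cval_pow {d : ℕ} (a : RingOfIntegers (Kneg d)) (n : ℕ) : cval (a ^ n) = cval a ^ n :=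
  map_pow (cvalHom d) a n
lemma cval_neg {d : ℕ} (a : RingOfIntegers (Kneg d)) : cval (-a) = -cval a :=
  map_neg (cvalHom d) a
lemma cval_one {d : ℕ} : cval (1 : RingOfIntegers (Kneg d)) = 1 := map_one (cvalHom d)

lemma cval_injective {d : ℕ} : Function.Injective (cval (d := d)) := by
  intro a b hab
  rw [cval_def, cval_def] at hab
  exact RingOfIntegers.coe_injective (Subtype.coe_injective hab)

/-- an algebraic integer with rational complex value is an integer -/
lemma rat_of_O {d : ℕ} (z : RingOfIntegers (Kneg d)) (q : ℚ) (hz : cval z = (q : ℂ)) :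
    ∃ n : ℤ, (n : ℚ) = q := by
  have hq : ((algebraMap ℚ (Kneg d) q : Kneg d) : ℂ) = (q : ℂ) := by
    rw [← IntermediateField.algebraMap_apply, ← IsScalarTower.algebraMap_apply,
      eq_ratCast (algebraMap ℚ ℂ) q]
  have hzq : (z : Kneg d) = algebraMap ℚ (Kneg d) q := Subtype.coe_injective ((cval_def z ▸ hz).trans hq.symm)
  have hint : IsIntegral ℤ (algebraMap ℚ (Kneg d) q) := hzq ▸ RingOfIntegers.isIntegral_coe z
  have : IsIntegral ℤ q := (isIntegral_algebraMap_iff (algebraMap ℚ (Kneg d)).injective).mp hint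
  obtain ⟨n, hn⟩ := IsIntegrallyClosed.isIntegral_iff.mp this
  exact ⟨n, by exact_mod_cast hn⟩

/-- the rep of an algebraic integer -/
lemma O_rep {d : ℕ} (hd : 0 < d) (z : RingOfIntegers (Kneg d)) :
    ∃ x y : ℚ, cval z = (x : ℂ) + (y : ℂ) * sqrtNeg d := by
  obtain ⟨x, y, hxy⟩ := mem_rep hd (z : Kneg d)
  exact ⟨x, y, by rw [cval_def, hxy]⟩

lemma trace_int {d : ℕ} (hd : 0 < d) (z : RingOfIntegers (Kneg d)) {x y : ℚ}
    (hrep : cval z = (x : ℂ) + (y : ℂ) * sqrtNeg d) :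
    ∃ a : ℤ, (a : ℚ) = 2 * x := by
  apply rat_of_O (z + conjO hd z)
  rw [cval_add, cval_conjO, hrep, map_add, map_mul, conj_theta, map_ratCast, map_ratCast]
  push_cast
  ring

lemma norm_int {d : ℕ} (hd : 0 < d) (z : RingOfIntegers (Kneg d)) {x y : ℚ}
    (hrep : cval z = (x : ℂ) + (y : ℂ) * sqrtNeg d) :
    ∃ n : ℤ, (n : ℚ) = x ^ 2 + d * y ^ 2 := by
  apply rat_of_O (z * conjO hd z)
  rw [cval_mul, cval_conjO, hrep, map_add, map_mul, conj_theta, map_ratCast, map_ratCast]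
  push_cast
  linear_combination (-(y:ℂ)^2) * theta_sq d

/-- a rational whose square is an integer is an integer -/
lemma int_of_sq {c : ℚ} {m : ℤ} (hc : c ^ 2 = (m : ℚ)) : ∃ c' : ℤ, (c' : ℚ) = c := by
  have hint : IsIntegral ℤ c := by
    refine ⟨X ^ 2 - C m, monic_X_pow_sub_C m two_ne_zero, ?_⟩
    rw [eval₂_sub, eval₂_pow, eval₂_X, eval₂_C]
    simp [hc]
  exact IsIntegrallyClosed.isIntegral_iff.mp hint

lemma m_dvd {D : ℕ} (hsf : Squarefree D) {y : ℚ} {m : ℤ}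
    (hm : (m : ℚ) = 4 * D * y ^ 2) : (D : ℤ) ∣ m := by
  have hsq : (2 * D * y) ^ 2 = ((D * m : ℤ) : ℚ) := by push_cast; linear_combination (-(D : ℚ)) * hm
  obtain ⟨c, hc⟩ := int_of_sq hsq
  have hc2 : c ^ 2 = D * m := by
    have h2 : ((c : ℚ)) ^ 2 = ((D * m : ℤ) : ℚ) := by rw [hc]; exact hsq
    exact_mod_cast h2
  have hsfZ : Squarefree (D : ℤ) := Int.squarefree_natCast.mpr hsf
  have hDc : (D : ℤ) ∣ c := by
    rw [← hsfZ.dvd_pow_iff_dvd (two_ne_zero)]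
    exact ⟨m, hc2⟩
  obtain ⟨e, he⟩ := hDc
  have : (D : ℤ) * m = D * (D * e ^ 2) := by rw [← hc2, he]; ring
  have hD0 : (D : ℤ) ≠ 0 := by
    exact_mod_cast hsf.ne_zero
  exact ⟨e ^ 2, mul_left_cancel₀ hD0 this⟩

/-- norms: the complex norm of an algebraic integer equals its rep norm -/
lemma cval_norm {d : ℕ} (hd : 0 < d) (z : RingOfIntegers (Kneg d)) {x y : ℚ} {N : ℤ}
    (hrep : cval z = (x : ℂ) + (y : ℂ) * sqrtNeg d)
    (hN : (N : ℚ) = x ^ 2 + d * y ^ 2) :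
    cval z * (starRingEnd ℂ) (cval z) = (N : ℂ) := by
  have hNC : (N : ℂ) = (x : ℂ) ^ 2 + (d : ℂ) * (y : ℂ) ^ 2 := by exact_mod_cast hN
  rw [hrep, map_add, map_mul, conj_theta, map_ratCast, map_ratCast]
  linear_combination (-(y : ℂ) ^ 2) * theta_sq d - hNC

lemma unit_pm {D : ℕ} (hD : 3 < D) (hsf : Squarefree D) (u : (RingOfIntegers (Kneg D))ˣ) :
    cval (u : RingOfIntegers (Kneg D)) = 1 ∨ cval (u : RingOfIntegers (Kneg D)) = -1 := by
  have hd : 0 < D := by omega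
  obtain ⟨x, y, hu⟩ := O_rep hd (u : RingOfIntegers (Kneg D))
  obtain ⟨x', y', hv⟩ := O_rep hd ((u⁻¹ : (RingOfIntegers (Kneg D))ˣ) : RingOfIntegers (Kneg D))
  obtain ⟨N, hN⟩ := norm_int hd _ hu
  obtain ⟨N', hN'⟩ := norm_int hd _ hv
  have hNc := cval_norm hd _ hu hN
  have hNc' := cval_norm hd _ hv hN'
  set A := cval (u : RingOfIntegers (Kneg D)) with hA
  set B := cval ((u⁻¹ : (RingOfIntegers (Kneg D))ˣ) : RingOfIntegers (Kneg D)) with hB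
  have h2 : A * B = 1 := by
    rw [hA, hB, ← cval_mul, Units.mul_inv, cval_one]
  have hNN' : ((N * N' : ℤ) : ℂ) = 1 := by
    push_cast
    rw [← hNc, ← hNc']
    calc A * (starRingEnd ℂ) A * (B * (starRingEnd ℂ) B)
        = (A * B) * (starRingEnd ℂ) (A * B) := by rw [map_mul]; ring
      _ = 1 := by rw [h2]; simp
  have hNN1 : N * N' = 1 := by exact_mod_cast hNN'
  have hNnn : 0 ≤ N := by
    have : (0 : ℚ) ≤ (N : ℚ) := by rw [hN]; positivity
    exact_mod_cast this
  have hN1 : N = 1 := by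
    rcases Int.isUnit_iff.mp (IsUnit.of_mul_eq_one (a := N) N' hNN1) with h | h <;> omega
  rw [hN1] at hN
  push_cast at hN
  by_cases hy : y = 0
  · subst hy
    have hx2 : (x - 1) * (x + 1) = 0 := by linear_combination -hN
    rcases mul_eq_zero.mp hx2 with h | h
    · left; rw [hu, show x = 1 by linarith]; push_cast; ring
    · right; rw [hu, show x = -1 by linarith]; push_cast; ring
  · exfalso
    obtain ⟨a, ha⟩ := trace_int hd _ hu
    have hmQ : ((4 - a ^ 2 : ℤ) : ℚ) = 4 * D * y ^ 2 := by
      push_cast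
      linear_combination (4 : ℚ) * hN - ((a : ℚ) + 2 * x) * ha
    have hdvd := m_dvd hsf hmQ
    have hmpos : 0 < (4 - a ^ 2 : ℤ) := by
      have : (0 : ℚ) < ((4 - a ^ 2 : ℤ) : ℚ) := by
        rw [hmQ]
        have : (0:ℚ) < D := by exact_mod_cast hd
        positivity
      exact_mod_cast this
    have hle := Int.le_of_dvd hmpos hdvd
    have hD4 : (D : ℤ) ≤ 4 := by nlinarith [sq_nonneg a]
    have : D = 4 := by omega
    subst this
    exact (by decide : ¬ IsUnit 2) (hsf 2 ⟨1, by norm_num⟩)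

theorem stmt6 (g D X Y : ℕ) (hg : 2 ≤ g) (hD : 3 < D) (hsf : Squarefree D)
    (hX : 0 < X) (hY : 0 < Y) (h : X ^ 2 + D = 4 * Y ^ g)
    (hsmall : 16 * Y ^ g < (1 + D) ^ 2)
    (β : RingOfIntegers (Kneg D)) (hβ : ((β : Kneg D) : ℂ) = ((X : ℂ) + sqrtNeg D) / 2)
    (𝔞 : (Ideal (RingOfIntegers (Kneg D)))⁰) (h𝔞 : (𝔞 : Ideal (RingOfIntegers (Kneg D))) ^ g = Ideal.span {β}) :
    orderOf (ClassGroup.mk0 𝔞) = g := by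
  have hd : 0 < D := by omega
  -- order divides g
  have hg1 : ClassGroup.mk0 𝔞 ^ g = 1 := by
    rw [← map_pow]
    refine (ClassGroup.mk0_eq_one_iff (𝔞 ^ g).2).mpr ?_
    rw [SubmonoidClass.coe_pow, h𝔞]
    exact ⟨β, rfl⟩
  have ho_dvd : orderOf (ClassGroup.mk0 𝔞) ∣ g := orderOf_dvd_of_pow_eq_one hg1
  by_contra hne
  set o := orderOf (ClassGroup.mk0 𝔞) with ho
  have hg0 : g ≠ 0 := by omega
  obtain ⟨k, hk⟩ := ho_dvd
  have ho0 : o ≠ 0 := by rintro h0; rw [h0] at hk; simp at hk; omega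
  have hk2 : 2 ≤ k := by
    rcases Nat.lt_or_ge k 2 with hlt | hge
    · interval_cases k
      · omega
      · exfalso; exact hne (by omega)
    · exact hge
  -- principal at o
  have hprinc : ((𝔞 ^ o : (Ideal (RingOfIntegers (Kneg D)))⁰) : Ideal (RingOfIntegers (Kneg D))).IsPrincipal := by
    refine (ClassGroup.mk0_eq_one_iff (𝔞 ^ o).2).mp ?_
    rw [map_pow]
    exact pow_orderOf_eq_one _
  obtain ⟨α, hα⟩ := hprinc.principal
  have hα' : (𝔞 : Ideal (RingOfIntegers (Kneg D))) ^ o = Ideal.span {α} := by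
    rw [← SubmonoidClass.coe_pow]; exact hα
  have hspan : Ideal.span {α ^ k} = Ideal.span {β} := by
    rw [← Ideal.span_singleton_pow, ← hα', ← pow_mul, ← hk, h𝔞]
  obtain ⟨u, hu⟩ := Ideal.span_singleton_eq_span_singleton.mp hspan
  -- values
  obtain ⟨x, y, hxy⟩ := O_rep hd α
  have hβval : cval β = ((X : ℂ) + sqrtNeg D) / 2 := by rw [cval_def, hβ]
  have hε := unit_pm hD hsf u
  -- u = 1 or -1 in the ring
  have huO : (u : RingOfIntegers (Kneg D)) = 1 ∨ (u : RingOfIntegers (Kneg D)) = -1 := by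
    rcases hε with h1 | h1
    · left; apply cval_injective; rw [h1, cval_one]
    · right; apply cval_injective; rw [h1, cval_neg, cval_one]
  -- divisibility
  have hdvd : (α - conjO hd α) ∣ (β - conjO hd β) := by
    rcases huO with h1 | h1
    · have hβeq : β = α ^ k := by rw [← hu, h1, mul_one]
      rw [hβeq, map_pow]
      exact sub_dvd_pow_sub_pow _ _ k
    · have hβeq : β = -(α ^ k) := by rw [← hu, h1]; ring
      rw [hβeq, map_neg, map_pow, show -(α^k) - -((conjO hd α)^k) = -(α^k - (conjO hd α)^k) by ring]
      exact Dvd.dvd.neg_right (sub_dvd_pow_sub_pow _ _ k)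
  obtain ⟨c, hc⟩ := hdvd
  -- value equation
  have hval : sqrtNeg D = (2 * (y : ℂ)) * sqrtNeg D * cval c := by
    have hcc := congrArg cval hc
    rw [cval_sub, cval_mul, cval_sub, cval_conjO, cval_conjO, hβval, hxy] at hcc
    simp only [map_div₀, map_add, map_mul, map_natCast, map_ratCast, map_ofNat,
      conj_theta] at hcc
    calc sqrtNeg D = ((X:ℂ) + sqrtNeg D)/2 - ((X:ℂ) + -sqrtNeg D)/2 := by ring
    _ = ((x:ℂ) + (y:ℂ) * sqrtNeg D - ((x:ℂ) + (y:ℂ) * -sqrtNeg D)) * cval c := hcc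
    _ = (2 * (y:ℂ)) * sqrtNeg D * cval c := by ring
  have hy0 : y ≠ 0 := by
    rintro rfl
    rw [show ((0:ℚ):ℂ) = 0 by norm_num] at hval
    simp at hval
    exact theta_ne_zero hd hval
  -- cval c
  have h2y : (2 * (y:ℂ)) ≠ 0 := by
    simp only [ne_eq, mul_eq_zero]
    push_neg
    exact ⟨two_ne_zero, by exact_mod_cast hy0⟩
  have hθ := theta_ne_zero hd
  have hcval : cval c = ((1 / (2 * y) : ℚ) : ℂ) := by
    have hyC : (y : ℂ) ≠ 0 := by exact_mod_cast hy0
    have hrhs : 2 * (y:ℂ) * sqrtNeg D * ((1 / (2 * y) : ℚ) : ℂ) = sqrtNeg D := by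
      push_cast
      field_simp
    apply mul_left_cancel₀ (mul_ne_zero h2y hθ)
    rw [← hval, hrhs]
  -- c rep
  obtain ⟨xc, yc, hcrep⟩ := O_rep hd c
  have hyc : yc = 0 := by
    have him := congrArg Complex.im (hcrep.symm.trans hcval)
    simp only [Complex.add_im, Complex.mul_im, Complex.ratCast_im, Complex.ratCast_re,
      theta_im, Complex.ratCast_im, zero_mul, add_zero, zero_add, mul_zero] at him
    have hsD : Real.sqrt D ≠ 0 := by
      have := Real.sqrt_pos.mpr (by exact_mod_cast hd : (0:ℝ) < (D:ℝ))
      linarith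
    have : (yc : ℝ) = 0 := by
      rcases mul_eq_zero.mp him with h1 | h1
      · exact h1
      · exact absurd h1 hsD
    exact_mod_cast this
  subst hyc
  have hxc : (xc : ℚ) = 1 / (2 * y) := by
    have : ((xc : ℚ) : ℂ) = ((1 / (2 * y) : ℚ) : ℂ) := by
      rw [← hcval, hcrep]; push_cast; ring
    exact_mod_cast this
  obtain ⟨n, hn⟩ := norm_int hd c hcrep
  rw [hxc] at hn
  simp only [ne_eq, OfNat.ofNat_ne_zero, not_false_eq_true, zero_pow, mul_zero, add_zero] at hn
  -- hn : (n : ℚ) = (1/(2y))^2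
  -- alpha data
  obtain ⟨a, ha⟩ := trace_int hd α hxy
  obtain ⟨N, hNa⟩ := norm_int hd α hxy
  have hmQ : ((4 * N - a ^ 2 : ℤ) : ℚ) = 4 * D * y ^ 2 := by
    push_cast
    linear_combination (4 : ℚ) * hNa - ((a : ℚ) + 2 * x) * ha
  have hdvdD := m_dvd hsf hmQ
  have hmn : (4 * N - a ^ 2) * n = (D : ℤ) := by
    have hq : (((4 * N - a ^ 2) * n : ℤ) : ℚ) = (D : ℚ) := by
      push_cast
      rw [show ((4 : ℚ) * N - a ^ 2) = ((4 * N - a ^ 2 : ℤ) : ℚ) by push_cast; ring, hmQ, hn]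
      have hyQ : (y : ℚ) ≠ 0 := hy0
      field_simp
      ring
    exact_mod_cast hq
  have hnpos : 0 < n := by
    have : (0 : ℚ) < (n : ℚ) := by
      rw [hn]
      have hq0 : (1 / (2 * y) : ℚ) ≠ 0 := one_div_ne_zero (mul_ne_zero two_ne_zero hy0)
      exact lt_of_le_of_ne (sq_nonneg _) (Ne.symm (pow_ne_zero 2 hq0))
    exact_mod_cast this
  have hDZpos : (0 : ℤ) < D := by exact_mod_cast hd
  have hmpos : 0 < 4 * N - a ^ 2 := by nlinarith
  have hDlem := Int.le_of_dvd hmpos hdvdD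
  have hn1 : n = 1 := by
    have hle1 : n ≤ 1 := by nlinarith
    omega
  have hmD : 4 * N - a ^ 2 = (D : ℤ) := by
    rw [hn1, mul_one] at hmn
    exact hmn
  -- a ≠ 0
  have ha0 : a ≠ 0 := by
    rintro rfl
    simp at hmD
    -- 4 * N = D
    have h4 : (4 : ℕ) ∣ D := by
      have : (4 : ℤ) ∣ (D : ℤ) := ⟨N, by omega⟩
      exact_mod_cast this
    obtain ⟨e, he⟩ := h4
    exact (by decide : ¬ IsUnit 2) (hsf 2 ⟨e, by omega⟩)
  -- N^k = Y^g
  have hNc := cval_norm hd α hxy hNa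
  have hu2 : cval (u : RingOfIntegers (Kneg D)) * (starRingEnd ℂ) (cval (u : RingOfIntegers (Kneg D))) = 1 := by
    rcases hε with h1 | h1 <;> rw [h1] <;> simp
  have hβ2 : cval β * (starRingEnd ℂ) (cval β) = ((Y : ℂ)) ^ g := by
    have hcast : ((X : ℂ)) ^ 2 + (D : ℂ) = 4 * (Y : ℂ) ^ g := by
      have hxx : ((X ^ 2 + D : ℕ) : ℂ) = ((4 * Y ^ g : ℕ) : ℂ) := by rw [h]
      push_cast at hxx
      linear_combination hxx
    rw [hβval]
    simp only [map_div₀, map_add, map_natCast, map_ofNat, conj_theta]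
    linear_combination (1/4 : ℂ) * hcast - (1/4 : ℂ) * theta_sq D
  have hβ3 : cval β * (starRingEnd ℂ) (cval β) = ((N : ℂ)) ^ k := by
    set A := cval α with hAdef
    set U := cval ((u : RingOfIntegers (Kneg D))) with hUdef
    rw [← hu, cval_mul, cval_pow, map_mul, map_pow]
    trans ((A * (starRingEnd ℂ) A) ^ k) * (U * (starRingEnd ℂ) U)
    · ring
    · rw [hNc, hu2, mul_one]
  have hYN : (Y : ℤ) ^ g = N ^ k := by
    have : ((Y : ℂ)) ^ g = ((N : ℂ)) ^ k := by rw [← hβ2, hβ3]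
    exact_mod_cast this
  have ha2 : (1 : ℤ) ≤ a ^ 2 := lt_of_le_of_ne (sq_nonneg a) (Ne.symm (pow_ne_zero 2 ha0))
  have hD3 : (3 : ℤ) < (D : ℤ) := by exact_mod_cast hD
  have hN1le : (1 : ℤ) ≤ N := by nlinarith
  have hNk : N ^ 2 ≤ N ^ k := pow_le_pow_right₀ hN1le hk2
  have hsm : (16 * (Y : ℤ) ^ g) < ((1 : ℤ) + D) ^ 2 := by exact_mod_cast hsmall
  have h1 : ((1 : ℤ) + D) ^ 2 ≤ (a ^ 2 + D) ^ 2 := by nlinarith [ha2, hD3, sq_nonneg a]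
  have h2 : a ^ 2 + (D : ℤ) = 4 * N := by linarith [hmD]
  have hbig : ((1 : ℤ) + D) ^ 2 ≤ 16 * (Y : ℤ) ^ g := by
    calc ((1 : ℤ) + D) ^ 2 ≤ (a ^ 2 + D) ^ 2 := h1
      _ = (4 * N) ^ 2 := by rw [h2]
      _ = 16 * N ^ 2 := by ring
      _ ≤ 16 * N ^ k := by linarith [hNk]
      _ = 16 * (Y : ℤ) ^ g := by rw [hYN]
  linarith [hsm, hbig]
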